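/- For every t ∈ K with t ≠ 0, the structure ((0,1),(t,0),(−(m+2),0)) (that is, d_{−(m+2)} perturbed by t times ψ^{0,0,m+2}_1) is a degree-(m+2) codifferential and is equivalent to d_#; hence every neighborhood of d_{−(m+2)} contains codifferentials equivalent to d_# (d_# jump-deforms to d_{−(m+2)}). -/
import Mathlib

namespace LinfClassification

variable {K : Type*} [Field K] [CharZero K]

/-- A degree-(m+2) structure `((a₁,a₂),(a₃,a₄),(a₅,a₆))` on the 1|2-dimensional
graded space, encoding the odd coderivation
`d = a₁ψ^{1,0,m+1}_3 + a₂ψ^{0,1,m+1}_3 + a₃ψ^{0,0,m+2}_1 + a₄ψ^{0,0,m+2}_2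
 + a₅ψ^{1,1,m}_1 + a₆ψ^{1,1,m}_2`. -/
abbrev Str (K : Type*) := (K × K) × (K × K) × (K × K)

/-- The six codifferential equations expressing `[d,d] = 0`. -/
def IsCodiff (m : ℕ) (d : Str K) : Prop :=
  d.1.1 * d.2.2.1 + d.1.2 * d.2.2.2 = 0 ∧
  d.1.1 * d.2.1.1 + d.1.2 * d.2.1.2 = 0 ∧
  d.2.1.1 * (d.2.2.1 + ((m : K) + 2) * d.1.2) = 0 ∧
  d.2.1.2 * (d.2.2.1 + ((m : K) + 2) * d.1.2) = 0 ∧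
  d.2.1.1 * (d.2.2.2 - ((m : K) + 2) * d.1.1) = 0 ∧
  d.2.1.2 * (d.2.2.2 - ((m : K) + 2) * d.1.1) = 0

/-- Action of `(g, q) ∈ GL₂(K) × Kˣ` with `g = [[p, q'], [r, s]]`
(`det g = p·s - q'·r ≠ 0`) and scalar `t ≠ 0` on a degree-(m+2) structure:
`(g,t)·(u,v,w) = (tᵐ·(u g), t^{m+2}·g⁻¹ v, det(g)·tᵐ·g⁻¹ w)`,
`u` a row vector and `v, w` column vectors. -/
def act (m : ℕ) (p q r s t : K) (d : Str K) : Str K :=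
  ((t ^ m * (d.1.1 * p + d.1.2 * r), t ^ m * (d.1.1 * q + d.1.2 * s)),
   (t ^ (m + 2) * (p * s - q * r)⁻¹ * (s * d.2.1.1 - q * d.2.1.2),
    t ^ (m + 2) * (p * s - q * r)⁻¹ * (-r * d.2.1.1 + p * d.2.1.2)),
   (t ^ m * (s * d.2.2.1 - q * d.2.2.2),
    t ^ m * (-r * d.2.2.1 + p * d.2.2.2)))

/-- Linear equivalence: two degree-(m+2) structures lie in the same orbit. -/
def Equiv' (m : ℕ) (d d' : Str K) : Prop :=
  ∃ p q r s t : K, p * s - q * r ≠ 0 ∧ t ≠ 0 ∧ act m p q r s t d = d'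

/-- The normal form `d_∞ = ψ^{1,1,m}_1`. -/
def dInf : Str K := ((0, 0), (0, 0), (1, 0))

/-- The normal form `d_λ = ψ^{0,1,m+1}_3 + λψ^{1,1,m}_1`. -/
def dLam (lam : K) : Str K := ((0, 1), (0, 0), (lam, 0))

/-- The normal form `d_* = ψ^{0,0,m+2}_1`. -/
def dStar : Str K := ((0, 0), (1, 0), (0, 0))

/-- The normal form `d_# = ψ^{0,1,m+1}_3 + ψ^{0,0,m+2}_1 - (m+2)ψ^{1,1,m}_1`. -/
def dSharp (m : ℕ) : Str K := ((0, 1), (1, 0), (-((m : K) + 2), 0))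

/-- For every `t ≠ 0`, the perturbation of `d_{-(m+2)}` by `t` times
`ψ^{0,0,m+2}_1`, namely `((0,1),(t,0),(-(m+2),0))`, is a degree-(m+2)
codifferential equivalent to `d_#`: `d_#` jump-deforms to `d_{-(m+2)}`. -/
theorem dSharp_jump_to_dLam (m : ℕ) (t : K) (ht : t ≠ 0) :
    IsCodiff m ((((0 : K), 1), (t, 0), (-((m : K) + 2), 0)) : Str K) ∧
    Equiv' m ((((0 : K), 1), (t, 0), (-((m : K) + 2), 0)) : Str K)
      (dSharp m) := by
  constructor
  · refine ⟨by ring, by ring, by ring, by ring, by ring, by ring⟩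
  · refine ⟨t, 0, 0, 1, 1, by simpa using ht, one_ne_zero, ?_⟩
    simp [act, dSharp, ht, mul_comm]

end LinfClassification
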